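/- If A : [a,b] → L(H) is Bochner integrable, then A has a uniform HK-integral and the two integrals agree: (B)∫ₐᵇ A(t)dt = (HK)∫ₐᵇ A(t)dt. -/

import Mathlib

/-- Tagged HK-partition of `[a,b]` subordinate to the gauge `δ`. -/
def IsHKPartition (a b : ℝ) (δ : ℝ → ℝ) (n : ℕ) (t τ : ℕ → ℝ) : Prop :=
  t 0 = a ∧ t n = b ∧
  (∀ i < n, t i ≤ τ (i + 1) ∧ τ (i + 1) ≤ t (i + 1)) ∧
  (∀ i < n,
    t i ∈ Set.Ioo (τ (i + 1) - δ (τ (i + 1))) (τ (i + 1) + δ (τ (i + 1))) ∧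
    t (i + 1) ∈ Set.Ioo (τ (i + 1) - δ (τ (i + 1))) (τ (i + 1) + δ (τ (i + 1))))

variable {H : Type*} [NormedAddCommGroup H] [InnerProductSpace ℂ H]
  [CompleteSpace H] [TopologicalSpace.SeparableSpace H]

/-- `Q` is the uniform (operator-norm) Henstock-Kurzweil integral of the family
`A : [a,b] → L(H)`: for every `ε > 0` there is a gauge `δ` such that the Riemann sums
of every HK-partition for `δ` are within `ε` of `Q` in operator norm. -/
def IsHKIntegral (a b : ℝ) (A : ℝ → H →L[ℂ] H) (Q : H →L[ℂ] H) : Prop :=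
  ∀ ε > 0, ∃ δ : ℝ → ℝ, (∀ x ∈ Set.Icc a b, 0 < δ x) ∧
    ∀ (n : ℕ) (t τ : ℕ → ℝ), IsHKPartition a b δ n t τ →
      ‖(∑ i ∈ Finset.range n, (t (i + 1) - t i) • A (τ (i + 1))) - Q‖ < ε

/-- Monotonicity of the division points of an HK-partition. -/
lemma hk_mono {n : ℕ} {t : ℕ → ℝ} (h : ∀ i < n, t i ≤ t (i + 1)) :
    ∀ i j, i ≤ j → j ≤ n → t i ≤ t j := by
  intro i j
  induction j with
  | zero => intro hij _; simp [Nat.le_zero.1 hij]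
  | succ k ih =>
    intro hij hjn
    rcases Nat.eq_or_lt_of_le hij with rfl | hlt
    · exact le_refl _
    · exact le_trans (ih (Nat.lt_succ_iff.1 hlt) (le_trans (Nat.le_succ k) hjn))
        (h k (Nat.lt_of_succ_le hjn))

/-- If `A : [a,b] → L(H)` is Bochner integrable, then `A` has a uniform HK-integral
and the two integrals agree. -/
theorem isHKIntegral_of_bochnerIntegrable (a b : ℝ) (hab : a ≤ b)
    (A : ℝ → H →L[ℂ] H)
    (hA : MeasureTheory.IntegrableOn A (Set.Icc a b) MeasureTheory.volume) :
    IsHKIntegral a b A (∫ s in Set.Icc a b, A s) := by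
  classical
  rcases eq_or_lt_of_le hab with rfl | hlt
  · -- degenerate case `a = b`
    intro ε hε
    refine ⟨fun _ => 1, fun _ _ => one_pos, fun n t τ hP => ?_⟩
    obtain ⟨h0, hn, hττ, -⟩ := hP
    have hmono := hk_mono (n := n) (t := t) fun i hi => le_trans (hττ i hi).1 (hττ i hi).2
    have hzero : ∀ i ∈ Finset.range n, (t (i + 1) - t i) • A (τ (i + 1)) = 0 := by
      intro i hi
      rw [Finset.mem_range] at hi
      have h1 : t i ≤ t (i + 1) := le_trans (hττ i hi).1 (hττ i hi).2
      have h2 : t (i + 1) ≤ t i := by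
        calc t (i + 1) ≤ t n := hmono _ _ hi (le_refl n)
        _ = t 0 := by rw [hn, ← h0]
        _ ≤ t i := hmono 0 i (Nat.zero_le i) hi.le
      have : t (i + 1) - t i = 0 := by linarith
      simp [this]
    rw [Finset.sum_congr rfl hzero]
    have hIcc : MeasureTheory.volume (Set.Icc a a) = 0 := by simp
    rw [MeasureTheory.setIntegral_measure_zero _ hIcc]
    simpa using hε
  · -- main case `a < b`
    intro ε hε
    set e : (Fin 1 → ℝ) ≃ᵐ ℝ := MeasurableEquiv.funUnique (Fin 1) ℝ with he
    have he' : ∀ x : Fin 1 → ℝ, e x = x 0 := fun x => rfl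
    set I : BoxIntegral.Box (Fin 1) := ⟨fun _ => a, fun _ => b, fun _ => hlt⟩ with hI
    have hIset : (I : Set (Fin 1 → ℝ)) = e ⁻¹' Set.Ioc a b := by
      ext x
      simp only [BoxIntegral.Box.mem_coe, BoxIntegral.Box.mem_def, Set.mem_preimage, he']
      constructor
      · intro h; exact h 0
      · intro h i
        have : i = 0 := Subsingleton.elim _ _
        rw [this]; exact h
    have hvol := MeasureTheory.volume_preserving_funUnique (Fin 1) ℝ
    have hemb : MeasurableEmbedding e := e.measurableEmbedding
    have hAIoc : MeasureTheory.IntegrableOn A (Set.Ioc a b) MeasureTheory.volume :=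
      hA.mono_set Set.Ioc_subset_Icc_self
    have hfI : MeasureTheory.IntegrableOn (fun x => A (e x)) I MeasureTheory.volume := by
      rw [hIset]
      exact (hvol.integrableOn_comp_preimage hemb).2 hAIoc
    have hInt : (∫ x in (I : Set (Fin 1 → ℝ)), A (e x)) = ∫ s in Set.Icc a b, A s := by
      rw [hIset]; refine (hvol.setIntegral_preimage_emb hemb A (Set.Ioc a b)).trans ?_
      exact MeasureTheory.setIntegral_congr_set MeasureTheory.Ioc_ae_eq_Icc
    have hbox := hfI.hasBoxIntegral BoxIntegral.IntegrationParams.Henstock rfl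
    rw [BoxIntegral.hasIntegral_iff] at hbox
    obtain ⟨r, hrc, hr⟩ := hbox (ε / 2) (by linarith)
    refine ⟨fun x => r 1 (fun _ => x), fun x _ => (r 1 fun _ => x).2, fun n t τ hP => ?_⟩
    obtain ⟨h0, hn, hττ, hδ⟩ := hP
    have hmono := hk_mono (n := n) (t := t) fun i hi => le_trans (hττ i hi).1 (hττ i hi).2
    have hta : ∀ i ≤ n, a ≤ t i := fun i hi => h0 ▸ hmono 0 i (Nat.zero_le i) hi
    have htb : ∀ i ≤ n, t i ≤ b := fun i hi => hn ▸ hmono i n hi (le_refl n)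
    set B : ℕ → BoxIntegral.Box (Fin 1) := fun i =>
      if h : t i < t (i + 1) then ⟨fun _ => t i, fun _ => t (i + 1), fun _ => h⟩ else I with hB
    set K : Finset ℕ := (Finset.range n).filter (fun i => t i < t (i + 1)) with hK
    have hKmem : ∀ i ∈ K, i < n ∧ t i < t (i + 1) := fun i hi => by
      simpa [hK, Finset.mem_filter, Finset.mem_range] using hi
    have hBl : ∀ i ∈ K, (B i).lower = (fun _ => t i) ∧ (B i).upper = (fun _ => t (i + 1)) := by
      intro i hi
      obtain ⟨-, hti⟩ := hKmem i hi
      simp only [hB]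
      rw [dif_pos hti]
      exact ⟨rfl, rfl⟩
    have hBinj : ∀ i ∈ K, ∀ j ∈ K, B i = B j → i = j := by
      intro i hi j hj hij
      by_contra hne
      have hlow : t i = t j := by
        have h1 := (hBl i hi).1
        have h2 := (hBl j hj).1
        have := congrArg BoxIntegral.Box.lower hij
        rw [h1, h2] at this
        exact congrFun this 0
      rcases Nat.lt_or_ge i j with hij' | hij'
      · have : t (i + 1) ≤ t j := hmono (i + 1) j hij' (hKmem j hj).1.le
        have := (hKmem i hi).2
        linarith
      · have hji : j < i := by omega
        have : t (j + 1) ≤ t i := hmono (j + 1) i hji (hKmem i hi).1.le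
        have := (hKmem j hj).2
        linarith
    set tg : BoxIntegral.Box (Fin 1) → (Fin 1 → ℝ) := fun J =>
      if h : ∃ i, i ∈ K ∧ B i = J then fun _ => τ (h.choose + 1) else fun _ => a with htg
    have htgB : ∀ i ∈ K, tg (B i) = fun _ => τ (i + 1) := by
      intro i hi
      have h : ∃ j, j ∈ K ∧ B j = B i := ⟨i, hi, rfl⟩
      have hch := h.choose_spec
      have hci : h.choose = i := hBinj _ hch.1 _ hi hch.2
      simp only [htg, dif_pos h, hci]
    have hτmem : ∀ i ∈ K, a ≤ τ (i + 1) ∧ τ (i + 1) ≤ b := by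
      intro i hi
      obtain ⟨hin, -⟩ := hKmem i hi
      exact ⟨le_trans (hta i hin.le) (hττ i hin).1, le_trans (hττ i hin).2 (htb (i + 1) hin)⟩
    have hdisj : ∀ i ∈ K, ∀ j ∈ K, i < j →
        Disjoint ((B i : Set (Fin 1 → ℝ))) ((B j : Set (Fin 1 → ℝ))) := by
      intro i hi j hj hij
      rw [Set.disjoint_left]
      intro z hzi hzj
      have h1 : z 0 ≤ (B i).upper 0 :=
        ((show ∀ k, z k ∈ Set.Ioc ((B i).lower k) ((B i).upper k) from hzi) 0).2
      have h2 : (B j).lower 0 < z 0 :=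
        ((show ∀ k, z k ∈ Set.Ioc ((B j).lower k) ((B j).upper k) from hzj) 0).1
      rw [(hBl i hi).2] at h1
      rw [(hBl j hj).1] at h2
      have : t (i + 1) ≤ t j := hmono (i + 1) j hij (hKmem j hj).1.le
      simp only at h1 h2
      linarith
    set π : BoxIntegral.TaggedPrepartition I :=
      { boxes := K.image B
        le_of_mem' := by
          intro J hJ
          obtain ⟨i, hiK, rfl⟩ := Finset.mem_image.1 hJ
          rw [BoxIntegral.Box.le_iff_bounds, (hBl i hiK).1, (hBl i hiK).2]
          obtain ⟨hin, -⟩ := hKmem i hiK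
          exact ⟨fun _ => hta i hin.le, fun _ => htb (i + 1) hin⟩
        pairwiseDisjoint := by
          intro J1 hJ1 J2 hJ2 hne
          simp only [Finset.coe_image, Set.mem_image, Finset.mem_coe] at hJ1 hJ2
          obtain ⟨i, hiK, rfl⟩ := hJ1
          obtain ⟨j, hjK, rfl⟩ := hJ2
          have hij : i ≠ j := fun h => hne (by rw [h])
          rcases Nat.lt_or_ge i j with h' | h'
          · exact hdisj i hiK j hjK h'
          · exact (hdisj j hjK i hiK (lt_of_le_of_ne h' (Ne.symm hij))).symm
        tag := tg
        tag_mem_Icc := by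
          intro J
          simp only [htg]
          split_ifs with h
          · have hch := h.choose_spec
            have := hτmem _ hch.1
            exact Set.mem_Icc.2 ⟨fun _ => this.1, fun _ => this.2⟩
          · exact Set.mem_Icc.2 ⟨fun _ => le_refl a, fun _ => hab⟩ } with hπdef
    have hmemB : ∀ J, J ∈ π ↔ J ∈ K.image B := fun J => Iff.rfl
    have hπpart : π.IsPartition := by
      intro x hx
      have hx0 : x 0 ∈ Set.Ioc a b := hx 0
      have hn0 : 0 < n := by
        rcases Nat.eq_zero_or_pos n with rfl | h
        · rw [← h0, hn] at hlt; exact absurd hlt (lt_irrefl _)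
        · exact h
      set s : Finset ℕ := (Finset.range n).filter (fun i => t i < x 0) with hs
      have hs0 : 0 ∈ s := by
        simp only [hs, Finset.mem_filter, Finset.mem_range]
        exact ⟨hn0, h0 ▸ hx0.1⟩
      have hsne : s.Nonempty := ⟨0, hs0⟩
      set i := s.max' hsne with hi
      have his : i ∈ s := s.max'_mem hsne
      have hin : i < n := (Finset.mem_range.1 (Finset.mem_filter.1 his).1)
      have hti : t i < x 0 := (Finset.mem_filter.1 his).2
      have hle : x 0 ≤ t (i + 1) := by
        rcases Nat.lt_or_ge (i + 1) n with h1 | h1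
        · by_contra hcon
          push_neg at hcon
          have hmem : i + 1 ∈ s := by
            simp only [hs, Finset.mem_filter, Finset.mem_range]
            exact ⟨h1, hcon⟩
          have := s.le_max' _ hmem
          omega
        · have hne : i + 1 = n := by omega
          rw [hne, hn]; exact hx0.2
      have hiK : i ∈ K := by
        simp only [hK, Finset.mem_filter, Finset.mem_range]
        exact ⟨hin, lt_of_lt_of_le hti hle⟩
      refine ⟨B i, (hmemB _).2 (Finset.mem_image_of_mem B hiK), ?_⟩
      intro j
      have hj0 : j = 0 := Subsingleton.elim _ _
      rw [hj0]
      constructor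
      · rw [show (B i).lower = fun _ => t i from (hBl i hiK).1]; exact hti
      · rw [show (B i).upper = fun _ => t (i + 1) from (hBl i hiK).2]; exact hle
    have hmembase : BoxIntegral.IntegrationParams.MemBaseSet
        BoxIntegral.IntegrationParams.Henstock I 1 (r 1) π := by
      refine ⟨?_, fun _ => ?_, fun h => absurd h (by decide), fun h => absurd h (by decide)⟩
      · intro J hJ
        obtain ⟨i, hiK, rfl⟩ := Finset.mem_image.1 ((hmemB J).1 hJ)
        have htag : π.tag (B i) = fun _ => τ (i + 1) := htgB i hiK
        rw [htag]
        intro y hy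
        obtain ⟨hin, -⟩ := hKmem i hiK
        obtain ⟨hlo, hhi⟩ := hδ i hin
        rw [Metric.mem_closedBall, dist_pi_le_iff (le_of_lt (r 1 fun _ => τ (i + 1)).2)]
        intro j
        have hy1 : (B i).lower j ≤ y j := (Set.mem_Icc.1 hy).1 j
        have hy2 : y j ≤ (B i).upper j := (Set.mem_Icc.1 hy).2 j
        rw [(hBl i hiK).1] at hy1
        rw [(hBl i hiK).2] at hy2
        simp only at hy1 hy2
        rw [Real.dist_eq, abs_le]
        obtain ⟨ha1, -⟩ := hlo
        obtain ⟨-, hb2⟩ := hhi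
        constructor <;> [skip; skip]
        · linarith
        · linarith
      · intro J hJ
        obtain ⟨i, hiK, rfl⟩ := Finset.mem_image.1 ((hmemB J).1 hJ)
        have htag : π.tag (B i) = fun _ => τ (i + 1) := htgB i hiK
        rw [htag]
        obtain ⟨hin, -⟩ := hKmem i hiK
        refine Set.mem_Icc.2 ⟨?_, ?_⟩
        · rw [(hBl i hiK).1]; exact fun _ => (hττ i hin).1
        · rw [(hBl i hiK).2]; exact fun _ => (hττ i hin).2
    have hsum : BoxIntegral.integralSum (fun x => A (e x))
        (MeasureTheory.volume : MeasureTheory.Measure (Fin 1 → ℝ)).toBoxAdditive.toSMul π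
        = ∑ i ∈ Finset.range n, (t (i + 1) - t i) • A (τ (i + 1)) := by
      have hstep1 : BoxIntegral.integralSum (fun x => A (e x))
          (MeasureTheory.volume : MeasureTheory.Measure (Fin 1 → ℝ)).toBoxAdditive.toSMul π
          = ∑ i ∈ K, (t (i + 1) - t i) • A (τ (i + 1)) := by
        rw [BoxIntegral.integralSum]
        rw [Finset.sum_image (fun i hi j hj hij => hBinj i hi j hj hij)]
        refine Finset.sum_congr rfl fun i hi => ?_
        have htag : π.tag (B i) = fun _ => τ (i + 1) := htgB i hi
        rw [htag]
        rw [BoxIntegral.BoxAdditiveMap.toSMul_apply]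
        have : (MeasureTheory.volume : MeasureTheory.Measure (Fin 1 → ℝ)).toBoxAdditive (B i)
            = t (i + 1) - t i := by
          rw [BoxIntegral.Box.volume_apply]
          rw [Fin.prod_univ_one, (hBl i hi).1, (hBl i hi).2]
        rw [this]
        rfl
      rw [hstep1]
      refine Finset.sum_subset (Finset.filter_subset _ _) ?_
      intro i hi hni
      rw [Finset.mem_range] at hi
      have h1 : t i ≤ t (i + 1) := le_trans (hττ i hi).1 (hττ i hi).2
      have h2 : ¬ t i < t (i + 1) := by
        intro hcon
        exact hni (by simp only [hK, Finset.mem_filter, Finset.mem_range]; exact ⟨hi, hcon⟩)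
      have : t (i + 1) - t i = 0 := by
        have := le_antisymm (not_lt.1 h2) h1
        linarith
      simp [this]
    have hdist := hr 1 π hmembase hπpart
    rw [hsum, hInt] at hdist
    rw [show ‖(∑ i ∈ Finset.range n, (t (i + 1) - t i) • A (τ (i + 1))) -
        (∫ s in Set.Icc a b, A s)‖ =
        dist (∑ i ∈ Finset.range n, (t (i + 1) - t i) • A (τ (i + 1)))
        (∫ s in Set.Icc a b, A s) from (dist_eq_norm _ _).symm]
    linarith
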